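/- Under the same assumptions as the rigid-inclusion energy lemma, but with w_V ∈ H²(Ω \ D̄) solving the cavity problem (homogeneous Neumann conditions on ∂D) and w₀ the reference solution, one has ∫_D P∇²w₀ · ∇²w₀ ≤ W_V − W₀, where W_V = ∫_{Ω\D̄} P∇²w_V·∇²w_V and W₀ = ∫_Ω P∇²w₀·∇²w₀. -/

import Mathlib

open MeasureTheory

noncomputable section

abbrev E2 := EuclideanSpace ℝ (Fin 2)

/-- The Hessian matrix `∇²w` of a scalar field on the plane. -/
def hess (w : E2 → ℝ) (x : E2) : Matrix (Fin 2) (Fin 2) ℝ :=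
  Matrix.of fun i j =>
    fderiv ℝ (fun y => fderiv ℝ w y (EuclideanSpace.single j 1)) x (EuclideanSpace.single i 1)

/-- Application of the (fourth-order) plate tensor `P` to a `2×2` matrix. -/
def Papp (P : E2 → Fin 2 → Fin 2 → Fin 2 → Fin 2 → ℝ) (x : E2)
    (A : Matrix (Fin 2) (Fin 2) ℝ) : Matrix (Fin 2) (Fin 2) ℝ :=
  Matrix.of fun i j => ∑ k, ∑ l, P x i j k l * A k l

/-- Frobenius product of `2×2` matrices. -/
def mdot (A B : Matrix (Fin 2) (Fin 2) ℝ) : ℝ := ∑ i, ∑ j, A i j * B i j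

/-- The bilinear strain energy `∫_S P∇²w · ∇²v`. -/
def plateEnergy (P : E2 → Fin 2 → Fin 2 → Fin 2 → Fin 2 → ℝ) (S : Set E2)
    (w v : E2 → ℝ) : ℝ :=
  ∫ x in S, mdot (Papp P x (hess w x)) (hess v x)

lemma hess_entry_eq (w : E2 → ℝ) (hw : ContDiff ℝ 2 w) (x : E2) (i j : Fin 2) :
    hess w x i j = fderiv ℝ (fderiv ℝ w) x (EuclideanSpace.single i 1)
      (EuclideanSpace.single j 1) := by
  have hd : DifferentiableAt ℝ (fderiv ℝ w) x :=
    (hw.fderiv_right (m := 1) (by norm_num)).differentiable (by norm_num) x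
  have h := hd.hasFDerivAt.clm_apply (hasFDerivAt_const (EuclideanSpace.single j 1) x)
  simp at h
  show fderiv ℝ (fun y => fderiv ℝ w y (EuclideanSpace.single j 1)) x _ = _
  rw [h.fderiv]
  rfl

lemma hess_isSymm (w : E2 → ℝ) (hw : ContDiff ℝ 2 w) (x : E2) : (hess w x).IsSymm := by
  have hs : IsSymmSndFDerivAt ℝ w x := (hw.contDiffAt).isSymmSndFDerivAt (by simp)
  apply Matrix.ext
  intro i j
  rw [Matrix.transpose_apply, hess_entry_eq w hw x i j, hess_entry_eq w hw x j i]
  exact hs _ _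

lemma mdot_self_nonneg (A : Matrix (Fin 2) (Fin 2) ℝ) : 0 ≤ mdot A A := by
  simp only [mdot, Fin.sum_univ_two]
  nlinarith [mul_self_nonneg (A 0 0), mul_self_nonneg (A 0 1), mul_self_nonneg (A 1 0),
    mul_self_nonneg (A 1 1)]

lemma mdot_Papp_comm (P : E2 → Fin 2 → Fin 2 → Fin 2 → Fin 2 → ℝ) (x : E2)
    (h : ∀ i j k l, P x i j k l = P x k l i j) (A B : Matrix (Fin 2) (Fin 2) ℝ) :
    mdot (Papp P x A) B = mdot (Papp P x B) A := by
  simp only [mdot, Papp, Matrix.of_apply, Fin.sum_univ_two]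
  linear_combination A 0 0 * B 0 0 * h 0 0 0 0 + A 0 1 * B 0 0 * h 0 0 0 1 + A 1 0 * B 0 0 * h 0 0 1 0 + A 1 1 * B 0 0 * h 0 0 1 1 + A 0 0 * B 0 1 * h 0 1 0 0 + A 0 1 * B 0 1 * h 0 1 0 1 + A 1 0 * B 0 1 * h 0 1 1 0 + A 1 1 * B 0 1 * h 0 1 1 1 + A 0 0 * B 1 0 * h 1 0 0 0 + A 0 1 * B 1 0 * h 1 0 0 1 + A 1 0 * B 1 0 * h 1 0 1 0 + A 1 1 * B 1 0 * h 1 0 1 1 + A 0 0 * B 1 1 * h 1 1 0 0 + A 0 1 * B 1 1 * h 1 1 0 1 + A 1 0 * B 1 1 * h 1 1 1 0 + A 1 1 * B 1 1 * h 1 1 1 1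

lemma mdot_Papp_sub (P : E2 → Fin 2 → Fin 2 → Fin 2 → Fin 2 → ℝ) (x : E2)
    (A B : Matrix (Fin 2) (Fin 2) ℝ) :
    mdot (Papp P x (A - B)) (A - B) = mdot (Papp P x A) A - mdot (Papp P x A) B
      - mdot (Papp P x B) A + mdot (Papp P x B) B := by
  simp only [mdot, Papp, Matrix.of_apply, Fin.sum_univ_two, Matrix.sub_apply]
  ring

/-- Energy lemma for a cavity: `∫_D P∇²w₀·∇²w₀ ≤ W_V − W₀`, where
`W_V = ∫_{Ω\D̄} P∇²w_V·∇²w_V` and `W₀ = ∫_Ω P∇²w₀·∇²w₀` are the works exerted by the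
boundary couple field, represented by the linear load functional `ℓ` of its weak
formulation (the cavity problem has homogeneous Neumann conditions on `∂D`, so all
test functions are admissible). -/
theorem energy_lemma_cavity
    (Ω D : Set E2) (hΩopen : IsOpen Ω) (hΩconn : IsConnected Ω)
    (hΩbd : Bornology.IsBounded Ω)
    (hDopen : IsOpen D) (hDconn : IsConnected D) (hDΩ : closure D ⊆ Ω)
    (hconn : IsConnected (Ω \ closure D))
    (P : E2 → Fin 2 → Fin 2 → Fin 2 → Fin 2 → ℝ) (γ K : ℝ) (hγ : 0 < γ)
    (hPbd : ∀ x, ∀ i j k l, |P x i j k l| ≤ K)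
    (hPsym : ∀ x, ∀ i j k l, P x i j k l = P x k l i j ∧ P x i j k l = P x k l j i)
    (hPconv : ∀ x, ∀ A : Matrix (Fin 2) (Fin 2) ℝ, A.IsSymm →
      γ * mdot A A ≤ mdot (Papp P x A) A)
    (ℓ : (E2 → ℝ) →ₗ[ℝ] ℝ)
    (w₀ wV : E2 → ℝ) (hw₀ : ContDiff ℝ 2 w₀) (hwV : ContDiff ℝ 2 wV)
    -- the reference solution: weak formulation of the Neumann problem in `Ω`
    (hweak₀ : ∀ v : E2 → ℝ, ContDiff ℝ 2 v → plateEnergy P Ω w₀ v = ℓ v)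
    -- the cavity solution: weak formulation in `Ω \ D̄`
    (hweakV : ∀ v : E2 → ℝ, ContDiff ℝ 2 v →
      plateEnergy P (Ω \ closure D) wV v = ℓ v)
    -- integrability of the energy densities
    (hint₀ : IntegrableOn (fun x => mdot (Papp P x (hess w₀ x)) (hess w₀ x)) Ω)
    (hintV : IntegrableOn (fun x => mdot (Papp P x (hess wV x)) (hess wV x)) (Ω \ closure D)) :
    plateEnergy P D w₀ w₀ ≤
      plateEnergy P (Ω \ closure D) wV wV - plateEnergy P Ω w₀ w₀ := by

  set S := Ω \ closure D with hS
  set aa : E2 → ℝ := fun x => mdot (Papp P x (hess wV x)) (hess wV x) with haa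
  set bb : E2 → ℝ := fun x => mdot (Papp P x (hess w₀ x)) (hess w₀ x) with hbb
  set f : E2 → ℝ := fun x => mdot (Papp P x (hess wV x)) (hess w₀ x) with hf
  have hsym0 : ∀ x, (hess w₀ x).IsSymm := hess_isSymm w₀ hw₀
  have hsymV : ∀ x, (hess wV x).IsSymm := hess_isSymm wV hwV
  have hbbpos : ∀ x, 0 ≤ bb x := fun x =>
    le_trans (le_trans (mul_nonneg hγ.le (mdot_self_nonneg _)) (hPconv x _ (hsym0 x)))
      (le_refl _)
  have haapos : ∀ x, 0 ≤ aa x := fun x =>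
    le_trans (mul_nonneg hγ.le (mdot_self_nonneg _)) (hPconv x _ (hsymV x))
  have key : ∀ x, 2 * f x ≤ aa x + bb x := by
    intro x
    have hABsym : (hess wV x - hess w₀ x).IsSymm := (hsymV x).sub (hsym0 x)
    have h1 : 0 ≤ mdot (Papp P x (hess wV x - hess w₀ x)) (hess wV x - hess w₀ x) :=
      le_trans (mul_nonneg hγ.le (mdot_self_nonneg _)) (hPconv x _ hABsym)
    have h2 := mdot_Papp_sub P x (hess wV x) (hess w₀ x)
    have h3 := mdot_Papp_comm P x (fun i j k l => (hPsym x i j k l).1) (hess wV x) (hess w₀ x)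
    simp only [haa, hbb, hf]
    linarith
  have hDΩ' : D ⊆ Ω := fun x hx => hDΩ (subset_closure hx)
  have hSmeas : MeasurableSet S := (hΩopen.measurableSet).diff (isClosed_closure.measurableSet)
  have hbbS : IntegrableOn bb S := hint₀.mono_set Set.diff_subset
  have hbbD : IntegrableOn bb D := hint₀.mono_set hDΩ'
  have hdisj : Disjoint D S := by
    rw [Set.disjoint_left]
    intro x hx hxS
    exact hxS.2 (subset_closure hx)
  have hunion : (∫ x in D, bb x) + ∫ x in S, bb x ≤ ∫ x in Ω, bb x := by
    rw [← setIntegral_union hdisj hSmeas hbbD hbbS]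
    apply setIntegral_mono_set hint₀ (Filter.Eventually.of_forall hbbpos)
    exact Filter.Eventually.of_forall (fun x hx => hx.elim (fun h => hDΩ' h) (fun h => h.1))
  have hEV : plateEnergy P S wV wV = ℓ wV := hweakV wV hwV
  have hEc : plateEnergy P S wV w₀ = ℓ w₀ := hweakV w₀ hw₀
  have hE0 : plateEnergy P Ω w₀ w₀ = ℓ w₀ := hweak₀ w₀ hw₀
  have hEVeq : plateEnergy P S wV wV = ∫ x in S, aa x := rfl
  have hEceq : plateEnergy P S wV w₀ = ∫ x in S, f x := rfl
  have hE0eq : plateEnergy P Ω w₀ w₀ = ∫ x in Ω, bb x := rfl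
  have hEDeq : plateEnergy P D w₀ w₀ = ∫ x in D, bb x := rfl
  have h2b : 2 * (∫ x in S, f x) ≤ (∫ x in S, aa x) + ∫ x in S, bb x := by
    by_cases hfi : IntegrableOn f S
    · have hm : ∫ x in S, 2 * f x ≤ ∫ x in S, (aa x + bb x) :=
        integral_mono (hfi.const_mul 2) (hintV.add hbbS) key
      rw [integral_const_mul, integral_add hintV hbbS] at hm
      exact hm
    · rw [integral_undef hfi]
      have h1 : 0 ≤ ∫ x in S, aa x := integral_nonneg haapos
      have h2 : 0 ≤ ∫ x in S, bb x := integral_nonneg hbbpos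
      linarith
  rw [hEceq] at hEc
  rw [hEVeq] at hEV
  rw [hE0eq] at hE0
  rw [hEDeq, hEVeq, hE0eq]
  linarith [hunion, h2b, hEc.symm ▸ h2b]


end
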